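/- Let V be a nonempty vertical path whose final step is S, and let H be a horizontal path. Then for every integer k, the number of shuffles of V and H whose shifted In-Vert equals k is the same as the number of shuffles of V and H whose signed peak-count equals k. -/

import Mathlib

inductive Step : Type
  | E | W | N | S
deriving DecidableEq, Repr

open Step

/-- A step is vertical (North or South). -/
def isVert : Step → Bool
  | N => true
  | S => true
  | _ => false

/-- A step is horizontal (East or West). -/
def isHoriz : Step → Bool
  | E => true
  | W => true
  | _ => false

/-- `σ` is a shuffle (interleaving) of the vertical path `V` and horizontal path `H`:
its subsequence of vertical steps is `V` and its subsequence of horizontal steps is `H`. -/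
def IsShuffle (V H σ : List Step) : Prop :=
  σ.filter isVert = V ∧ σ.filter isHoriz = H

/-- The list of adjacent pairs `(σ_i, σ_{i+1})` of a list. -/
def pairs (σ : List Step) : List (Step × Step) := σ.zip σ.tail

/-- Signed peak-count: (# of (N,W) adjacent pairs) − (# of (E,S) adjacent pairs). -/
def signedPeak (σ : List Step) : ℤ :=
  (((pairs σ).filter (fun p => decide (p.1 = N ∧ p.2 = W))).length : ℤ)
  - (((pairs σ).filter (fun p => decide (p.1 = E ∧ p.2 = S))).length : ℤ)

/-- Peak-count: (# of (N,W) adjacent pairs) + (# of (E,S) adjacent pairs). -/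
def peakCount (σ : List Step) : ℕ :=
  ((pairs σ).filter (fun p => decide (p.1 = N ∧ p.2 = W))).length
  + ((pairs σ).filter (fun p => decide (p.1 = E ∧ p.2 = S))).length

/-- Binomial coefficient with integer arguments, equal to 0 unless `0 ≤ b ≤ a`. -/
def zch (a b : ℤ) : ℕ := if 0 ≤ b ∧ b ≤ a then a.toNat.choose b.toNat else 0

/-- In-Vert of `σ`: the number of indices `j ≥ 1` such that `σ_j` is vertical and either
`j = 1` or `σ_{j−1}` is an inward step (inward steps are `{W, S}`).  This corresponds to
viewing `σ` as preceded by a virtual zeroth inward step and counting occurrences of an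
inward step immediately followed by a vertical step. -/
def invert (σ : List Step) : ℕ :=
  (if σ.head? = some Step.N ∨ σ.head? = some Step.S then 1 else 0)
  + ((pairs σ).filter (fun p => decide ((p.1 = Step.W ∨ p.1 = Step.S) ∧ (p.2 = Step.N ∨ p.2 = Step.S)))).length


namespace ShufAux
open Step

/-! ### Basic step facts -/

lemma vert_cases {s : Step} (h : isVert s = true) : s = N ∨ s = S := by
  cases s <;> simp_all [isVert]

lemma horiz_cases {s : Step} (h : isHoriz s = true) : s = E ∨ s = W := by
  cases s <;> simp_all [isHoriz]

lemma not_vert_horiz {s : Step} (h : isVert s = false) : isHoriz s = true := by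
  cases s <;> simp_all [isVert, isHoriz]

lemma not_horiz_vert {s : Step} (h : isHoriz s = false) : isVert s = true := by
  cases s <;> simp_all [isVert, isHoriz]

lemma horiz_not_vert {s : Step} (h : isHoriz s = true) : isVert s = false := by
  cases s <;> simp_all [isVert, isHoriz]

lemma vert_not_horiz {s : Step} (h : isVert s = true) : isHoriz s = false := by
  cases s <;> simp_all [isVert, isHoriz]

/-! ### The list of interleavings -/

def shuf : List Step → List Step → List (List Step)
  | [], Y => [Y]
  | x :: X, [] => [x :: X]
  | x :: X, y :: Y => ((shuf X (y :: Y)).map (x :: ·)) ++ ((shuf (x :: X) Y).map (y :: ·))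
  termination_by X Y => (X.length, Y.length)

@[simp] lemma shuf_nil_left (Y : List Step) : shuf [] Y = [Y] := by rw [shuf]

@[simp] lemma shuf_cons_nil (x : Step) (X : List Step) : shuf (x :: X) [] = [x :: X] := by
  rw [shuf]

@[simp] lemma shuf_nil_right (X : List Step) : shuf X [] = [X] := by
  cases X <;> simp

lemma shuf_cons_cons (x : Step) (X : List Step) (y : Step) (Y : List Step) :
    shuf (x :: X) (y :: Y) =
      ((shuf X (y :: Y)).map (x :: ·)) ++ ((shuf (x :: X) Y).map (y :: ·)) := by
  rw [shuf]

/-- Heads of interleavings come from the heads of the two lists. -/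
lemma head_mem_shuf {X Y ρ : List Step} (hρ : ρ ∈ shuf X Y) {c : Step}
    (hc : ρ.head? = some c) : X.head? = some c ∨ Y.head? = some c := by
  match X, Y with
  | [], Y => simp only [shuf_nil_left, List.mem_singleton] at hρ; subst hρ; right; exact hc
  | x :: X, [] => simp only [shuf_cons_nil, List.mem_singleton] at hρ; subst hρ; left; exact hc
  | x :: X, y :: Y =>
    rw [shuf_cons_cons] at hρ
    rcases List.mem_append.1 hρ with h | h <;> rcases List.mem_map.1 h with ⟨τ, -, rfl⟩ <;>
      simp_all

lemma filter_horiz_of_vert_nil : ∀ ρ : List Step, ρ.filter isVert = [] → ρ.filter isHoriz = ρ := by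
  intro ρ h
  induction ρ with
  | nil => rfl
  | cons c ρ ih =>
    cases hv : isVert c with
    | true => simp [List.filter_cons, hv] at h
    | false =>
      simp only [List.filter_cons, hv, Bool.false_eq_true, if_false] at h
      simp [List.filter_cons, not_vert_horiz hv, ih h]

lemma filter_vert_of_horiz_nil : ∀ ρ : List Step, ρ.filter isHoriz = [] → ρ.filter isVert = ρ := by
  intro ρ h
  induction ρ with
  | nil => rfl
  | cons c ρ ih =>
    cases hv : isHoriz c with
    | true => simp [List.filter_cons, hv] at h
    | false =>
      simp only [List.filter_cons, hv, Bool.false_eq_true, if_false] at h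
      simp [List.filter_cons, not_horiz_vert hv, ih h]

/-- Membership characterization of `shuf`. -/
lemma mem_shuf : ∀ X : List Step, ∀ Y : List Step, (∀ s ∈ X, isVert s = true) →
    (∀ s ∈ Y, isHoriz s = true) → ∀ ρ : List Step,
    (ρ ∈ shuf X Y ↔ (ρ.filter isVert = X ∧ ρ.filter isHoriz = Y)) := by
  intro X
  induction X with
  | nil =>
    intro Y _ hY ρ
    simp only [shuf_nil_left, List.mem_singleton]
    constructor
    · rintro rfl
      refine ⟨List.filter_eq_nil_iff.2 fun s hs => by simp [horiz_not_vert (hY s hs)], ?_⟩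
      exact List.filter_eq_self.2 hY
    · rintro ⟨h1, h2⟩
      rw [← h2, filter_horiz_of_vert_nil ρ h1]
  | cons x X ihX =>
    intro Y
    induction Y with
    | nil =>
      intro hX _ ρ
      simp only [shuf_cons_nil, List.mem_singleton]
      constructor
      · rintro rfl
        refine ⟨List.filter_eq_self.2 hX, List.filter_eq_nil_iff.2 fun s hs => by
          simp [vert_not_horiz (hX s hs)]⟩
      · rintro ⟨h1, h2⟩
        rw [← h1, filter_vert_of_horiz_nil ρ h2]
    | cons y Y ihY =>
      intro hX hY ρ
      have hxv : isVert x = true := hX x (by simp)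
      have hyh : isHoriz y = true := hY y (by simp)
      have hX' : ∀ s ∈ X, isVert s = true := fun s hs => hX s (by simp [hs])
      have hY' : ∀ s ∈ Y, isHoriz s = true := fun s hs => hY s (by simp [hs])
      rw [shuf_cons_cons]
      simp only [List.mem_append, List.mem_map]
      constructor
      · rintro (⟨τ, hτ, rfl⟩ | ⟨τ, hτ, rfl⟩)
        · obtain ⟨h1, h2⟩ := (ihX (y :: Y) hX' hY τ).1 hτ
          exact ⟨by simp [List.filter_cons, hxv, h1], by simp [List.filter_cons,
            vert_not_horiz hxv, h2]⟩
        · obtain ⟨h1, h2⟩ := (ihY hX hY' τ).1 hτ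
          exact ⟨by simp [List.filter_cons, horiz_not_vert hyh, h1], by simp [List.filter_cons,
            hyh, h2]⟩
      · rintro ⟨h1, h2⟩
        match ρ with
        | [] => simp at h1
        | c :: ρ =>
          cases hcv : isVert c with
          | true =>
            simp only [List.filter_cons, hcv, if_true] at h1
            simp only [List.filter_cons, vert_not_horiz hcv, Bool.false_eq_true, if_false] at h2
            rw [List.cons_eq_cons] at h1
            obtain ⟨rfl, h1⟩ := h1
            exact Or.inl ⟨ρ, (ihX (y :: Y) hX' hY ρ).2 ⟨h1, h2⟩, rfl⟩
          | false =>
            simp only [List.filter_cons, hcv, Bool.false_eq_true, if_false] at h1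
            simp only [List.filter_cons, not_vert_horiz hcv, if_true] at h2
            rw [List.cons_eq_cons] at h2
            obtain ⟨rfl, h2⟩ := h2
            exact Or.inr ⟨ρ, (ihY hX hY' ρ).2 ⟨h1, h2⟩, rfl⟩

/-- `shuf` has no duplicates. -/
lemma nodup_shuf : ∀ X : List Step, ∀ Y : List Step, (∀ s ∈ X, isVert s = true) →
    (∀ s ∈ Y, isHoriz s = true) → (shuf X Y).Nodup := by
  intro X
  induction X with
  | nil => intro Y _ _; simp
  | cons x X ihX =>
    intro Y
    induction Y with
    | nil => intro _ _; simp
    | cons y Y ihY =>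
      intro hX hY
      have hxv : isVert x = true := hX x (by simp)
      have hyh : isHoriz y = true := hY y (by simp)
      have hX' : ∀ s ∈ X, isVert s = true := fun s hs => hX s (by simp [hs])
      have hY' : ∀ s ∈ Y, isHoriz s = true := fun s hs => hY s (by simp [hs])
      rw [shuf_cons_cons]
      refine List.Nodup.append ?_ ?_ ?_
      · exact (ihX (y :: Y) hX' hY).map (fun a b h => by simpa using h)
      · exact (ihY hX hY').map (fun a b h => by simpa using h)
      · intro ρ h1 h2
        rcases List.mem_map.1 h1 with ⟨τ, -, rfl⟩
        rcases List.mem_map.1 h2 with ⟨τ', -, he⟩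
        have : y = x := by simpa using congrArg List.head? he
        subst this
        rw [horiz_not_vert] at hxv
        · simp at hxv
        · exact hyh


/-! ### Head-class indicators and the recursive statistics -/

def hE : List Step → Bool
  | Step.E :: _ => true
  | _ => false

def hN : List Step → Bool
  | Step.N :: _ => true
  | _ => false

@[simp] lemma hE_nil : hE [] = false := rfl
@[simp] lemma hE_E (ρ : List Step) : hE (E :: ρ) = true := rfl
@[simp] lemma hE_W (ρ : List Step) : hE (W :: ρ) = false := rfl
@[simp] lemma hE_N (ρ : List Step) : hE (N :: ρ) = false := rfl
@[simp] lemma hE_S (ρ : List Step) : hE (S :: ρ) = false := rfl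
@[simp] lemma hN_nil : hN [] = false := rfl
@[simp] lemma hN_E (ρ : List Step) : hN (E :: ρ) = false := rfl
@[simp] lemma hN_W (ρ : List Step) : hN (W :: ρ) = false := rfl
@[simp] lemma hN_N (ρ : List Step) : hN (N :: ρ) = true := rfl
@[simp] lemma hN_S (ρ : List Step) : hN (S :: ρ) = false := rfl

def iE (ρ : List Step) : ℤ := if hE ρ then 1 else 0
def iN (ρ : List Step) : ℤ := if hN ρ then 1 else 0
def iEN (ρ : List Step) : ℤ := iE ρ + iN ρ

lemma class_cases (ρ : List Step) :
    (hE ρ = true ∧ hN ρ = false) ∨ (hE ρ = false ∧ hN ρ = true) ∨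
      (hE ρ = false ∧ hN ρ = false) := by
  rcases ρ with _ | ⟨c, ρ⟩
  · right; right; simp
  · cases c <;> simp

lemma hE_head {ρ : List Step} (h : hE ρ = true) : ρ.head? = some E := by
  rcases ρ with _ | ⟨c, ρ⟩
  · simp at h
  · cases c <;> simp_all

lemma hN_head {ρ : List Step} (h : hN ρ = true) : ρ.head? = some N := by
  rcases ρ with _ | ⟨c, ρ⟩
  · simp at h
  · cases c <;> simp_all

def Ar : List Step → ℤ
  | [] => 0
  | Step.N :: ρ => Ar ρ
  | Step.S :: ρ => Ar ρ
  | Step.E :: ρ => Ar ρ + iEN ρ - 1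
  | Step.W :: ρ => Ar ρ + iEN ρ

def Br : List Step → ℤ
  | [] => 0
  | Step.N :: ρ => Br ρ + iE ρ
  | Step.S :: ρ => Br ρ
  | Step.E :: ρ => Br ρ + iE ρ - 1
  | Step.W :: ρ => Br ρ + iE ρ + iN ρ

@[simp] lemma Ar_nil : Ar [] = 0 := rfl
@[simp] lemma Ar_N (ρ : List Step) : Ar (N :: ρ) = Ar ρ := rfl
@[simp] lemma Ar_S (ρ : List Step) : Ar (S :: ρ) = Ar ρ := rfl
lemma Ar_E (ρ : List Step) : Ar (E :: ρ) = Ar ρ + iEN ρ - 1 := rfl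
lemma Ar_W (ρ : List Step) : Ar (W :: ρ) = Ar ρ + iEN ρ := rfl
@[simp] lemma Br_nil : Br [] = 0 := rfl
lemma Br_N (ρ : List Step) : Br (N :: ρ) = Br ρ + iE ρ := rfl
@[simp] lemma Br_S (ρ : List Step) : Br (S :: ρ) = Br ρ := rfl
lemma Br_E (ρ : List Step) : Br (E :: ρ) = Br ρ + iE ρ - 1 := rfl
lemma Br_W (ρ : List Step) : Br (W :: ρ) = Br ρ + iE ρ + iN ρ := rfl

lemma Ar_eq_Br_horiz : ∀ Y : List Step, (∀ s ∈ Y, isHoriz s = true) → Ar Y = Br Y := by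
  intro Y hY
  induction Y with
  | nil => rfl
  | cons y Y ih =>
    have hY' : ∀ s ∈ Y, isHoriz s = true := fun s hs => hY s (by simp [hs])
    have hNY : hN Y = false := by
      rcases Y with _ | ⟨c, Y⟩
      · simp
      · rcases horiz_cases (hY' c (by simp)) with rfl | rfl <;> simp
    rcases horiz_cases (hY y (by simp)) with rfl | rfl <;>
      simp [Ar_E, Ar_W, Br_E, Br_W, iEN, iN, hNY, ih hY']

lemma Ar_eq_Br_vert : ∀ X : List Step, (∀ s ∈ X, isVert s = true) → Ar X = Br X := by
  intro X hX
  induction X with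
  | nil => rfl
  | cons x X ih =>
    have hX' : ∀ s ∈ X, isVert s = true := fun s hs => hX s (by simp [hs])
    have hEX : hE X = false := by
      rcases X with _ | ⟨c, X⟩
      · simp
      · rcases vert_cases (hX' c (by simp)) with rfl | rfl <;> simp
    rcases vert_cases (hX x (by simp)) with rfl | rfl <;>
      simp [Br_N, iE, hEX, ih hX']

/-! ### countP helpers -/

lemma countP_congr' {α : Type*} {l : List α} {p q : α → Bool} (h : ∀ a, p a = q a) :
    l.countP p = l.countP q := by
  have : p = q := funext h
  rw [this]

lemma countP_split {α : Type*} (l : List α) (p q : α → Bool) :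
    l.countP p = l.countP (fun a => p a && q a) + l.countP (fun a => p a && !q a) := by
  induction l with
  | nil => simp
  | cons a l ih =>
    simp only [List.countP_cons, ih]
    cases hp : p a <;> cases hq : q a <;> simp [hp, hq] <;> omega

/-- Split a count into the three head classes E, N, other. -/
lemma countP_split3 (L : List (List Step)) (p : List Step → Bool) :
    L.countP p = L.countP (fun ρ => p ρ && hE ρ) + L.countP (fun ρ => p ρ && hN ρ)
      + L.countP (fun ρ => p ρ && !(hE ρ || hN ρ)) := by
  rw [countP_split L p hE]
  rw [countP_split L (fun ρ => p ρ && !hE ρ) hN]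
  have h1 : ∀ ρ : List Step, ((p ρ && !hE ρ) && hN ρ) = (p ρ && hN ρ) := by
    intro ρ
    rcases class_cases ρ with ⟨h1, h2⟩ | ⟨h1, h2⟩ | ⟨h1, h2⟩ <;> simp [h1, h2]
  have h2 : ∀ ρ : List Step, ((p ρ && !hE ρ) && !hN ρ) = (p ρ && !(hE ρ || hN ρ)) := by
    intro ρ
    rcases class_cases ρ with ⟨h1, h2⟩ | ⟨h1, h2⟩ | ⟨h1, h2⟩ <;> simp [h1, h2]
  rw [countP_congr' h1, countP_congr' h2]
  omega
/-! ### Vanishing and extraction lemmas -/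

lemma vanish_hE {X Y : List Step} (hX : ∀ s ∈ X, isVert s = true)
    (hY : Y.head? ≠ some E) (p : List Step → Bool) :
    (shuf X Y).countP (fun ρ => p ρ && hE ρ) = 0 := by
  rw [List.countP_eq_zero]
  intro ρ hρ hcon
  have hEρ : hE ρ = true := by
    cases h : hE ρ
    · simp [h] at hcon
    · rfl
  rcases head_mem_shuf hρ (hE_head hEρ) with h | h
  · rcases X with _ | ⟨c, X⟩
    · simp at h
    · have := hX c (by simp)
      simp only [List.head?_cons, Option.some.injEq] at h
      subst h
      simp [isVert] at this
  · exact hY h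

lemma vanish_hN {X Y : List Step} (hX : X.head? ≠ some N)
    (hY : ∀ s ∈ Y, isHoriz s = true) (p : List Step → Bool) :
    (shuf X Y).countP (fun ρ => p ρ && hN ρ) = 0 := by
  rw [List.countP_eq_zero]
  intro ρ hρ hcon
  have hNρ : hN ρ = true := by
    cases h : hN ρ
    · simp [h] at hcon
    · rfl
  rcases head_mem_shuf hρ (hN_head hNρ) with h | h
  · exact hX h
  · rcases Y with _ | ⟨c, Y⟩
    · simp at h
    · have := hY c (by simp)
      simp only [List.head?_cons, Option.some.injEq] at h
      subst h
      simp [isHoriz] at this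

lemma extract_hE (X Y : List Step) (hX : ∀ s ∈ X, isVert s = true) (p : List Step → Bool) :
    (shuf X (E :: Y)).countP (fun ρ => p ρ && hE ρ) = (shuf X Y).countP (fun ρ => p (E :: ρ)) := by
  rcases X with _ | ⟨x, X⟩
  · simp [List.countP_cons]
  · rw [shuf_cons_cons, List.countP_append, List.countP_map, List.countP_map]
    have h1 : (shuf X (E :: Y)).countP ((fun ρ => p ρ && hE ρ) ∘ (x :: ·)) = 0 := by
      rw [List.countP_eq_zero]
      intro ρ _ hcon
      rcases vert_cases (hX x (by simp)) with rfl | rfl <;> simp [Function.comp] at hcon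
    rw [h1]
    have h2 : ∀ ρ, ((fun ρ => p ρ && hE ρ) ∘ (E :: ·)) ρ = (fun ρ => p (E :: ρ)) ρ := by
      intro ρ; simp [Function.comp]
    rw [countP_congr' h2]
    omega

lemma extract_hN (X Y : List Step) (hY : ∀ s ∈ Y, isHoriz s = true) (p : List Step → Bool) :
    (shuf (N :: X) Y).countP (fun ρ => p ρ && hN ρ) = (shuf X Y).countP (fun ρ => p (N :: ρ)) := by
  rcases Y with _ | ⟨y, Y⟩
  · simp [List.countP_cons]
  · rw [shuf_cons_cons, List.countP_append, List.countP_map, List.countP_map]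
    have h1 : (shuf (N :: X) Y).countP ((fun ρ => p ρ && hN ρ) ∘ (y :: ·)) = 0 := by
      rw [List.countP_eq_zero]
      intro ρ _ hcon
      rcases horiz_cases (hY y (by simp)) with rfl | rfl <;> simp [Function.comp] at hcon
    rw [h1]
    have h2 : ∀ ρ, ((fun ρ => p ρ && hN ρ) ∘ (N :: ·)) ρ = (fun ρ => p (N :: ρ)) ρ := by
      intro ρ; simp [Function.comp]
    rw [countP_congr' h2]
    omega

/-- The key shift bijection: interleavings of `X` and `E::Y` starting with `E`
correspond to interleavings of `N::X` and `Y` starting with `N`, with `Br` shifted by 1. -/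
lemma key_shift (X Y : List Step) (hX : ∀ s ∈ X, isVert s = true)
    (hY : ∀ s ∈ Y, isHoriz s = true) (j : ℤ) :
    (shuf X (E :: Y)).countP (fun ρ => decide (Br ρ = j) && hE ρ) =
    (shuf (N :: X) Y).countP (fun ρ => decide (Br ρ = j + 1) && hN ρ) := by
  rw [extract_hE X Y hX, extract_hN X Y hY]
  apply countP_congr'
  intro ρ
  rw [Br_E, Br_N, decide_eq_decide]
  omega

/-! ### Expansion lemmas -/

section Expansions

variable (L : List (List Step)) (k : ℤ)

lemma expand_Ar_E :
    L.countP (fun ρ => decide (Ar (E :: ρ) = k)) =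
      L.countP (fun ρ => decide (Ar ρ = k) && hE ρ) +
      L.countP (fun ρ => decide (Ar ρ = k) && hN ρ) +
      L.countP (fun ρ => decide (Ar ρ = k + 1) && !(hE ρ || hN ρ)) := by
  rw [countP_split3 L (fun ρ => decide (Ar (E :: ρ) = k))]
  congr 1
  · congr 1 <;> apply countP_congr' <;> intro ρ <;>
      rcases class_cases ρ with ⟨h1, h2⟩ | ⟨h1, h2⟩ | ⟨h1, h2⟩ <;>
      simp [Ar_E, iEN, iE, iN, h1, h2] <;> omega
  · apply countP_congr'; intro ρ
    rcases class_cases ρ with ⟨h1, h2⟩ | ⟨h1, h2⟩ | ⟨h1, h2⟩ <;>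
      simp [Ar_E, iEN, iE, iN, h1, h2] <;> omega

lemma expand_Ar_W :
    L.countP (fun ρ => decide (Ar (W :: ρ) = k)) =
      L.countP (fun ρ => decide (Ar ρ = k - 1) && hE ρ) +
      L.countP (fun ρ => decide (Ar ρ = k - 1) && hN ρ) +
      L.countP (fun ρ => decide (Ar ρ = k) && !(hE ρ || hN ρ)) := by
  rw [countP_split3 L (fun ρ => decide (Ar (W :: ρ) = k))]
  congr 1
  · congr 1 <;> apply countP_congr' <;> intro ρ <;>
      rcases class_cases ρ with ⟨h1, h2⟩ | ⟨h1, h2⟩ | ⟨h1, h2⟩ <;>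
      simp [Ar_W, iEN, iE, iN, h1, h2] <;> omega
  · apply countP_congr'; intro ρ
    rcases class_cases ρ with ⟨h1, h2⟩ | ⟨h1, h2⟩ | ⟨h1, h2⟩ <;>
      simp [Ar_W, iEN, iE, iN, h1, h2] <;> omega

lemma expand_Br_N :
    L.countP (fun ρ => decide (Br (N :: ρ) = k)) =
      L.countP (fun ρ => decide (Br ρ = k - 1) && hE ρ) +
      L.countP (fun ρ => decide (Br ρ = k) && hN ρ) +
      L.countP (fun ρ => decide (Br ρ = k) && !(hE ρ || hN ρ)) := by
  rw [countP_split3 L (fun ρ => decide (Br (N :: ρ) = k))]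
  congr 1
  · congr 1 <;> apply countP_congr' <;> intro ρ <;>
      rcases class_cases ρ with ⟨h1, h2⟩ | ⟨h1, h2⟩ | ⟨h1, h2⟩ <;>
      simp [Br_N, iE, h1, h2] <;> omega
  · apply countP_congr'; intro ρ
    rcases class_cases ρ with ⟨h1, h2⟩ | ⟨h1, h2⟩ | ⟨h1, h2⟩ <;>
      simp [Br_N, iE, h1, h2] <;> omega

lemma expand_Br_E :
    L.countP (fun ρ => decide (Br (E :: ρ) = k)) =
      L.countP (fun ρ => decide (Br ρ = k) && hE ρ) +
      L.countP (fun ρ => decide (Br ρ = k + 1) && hN ρ) +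
      L.countP (fun ρ => decide (Br ρ = k + 1) && !(hE ρ || hN ρ)) := by
  rw [countP_split3 L (fun ρ => decide (Br (E :: ρ) = k))]
  congr 1
  · congr 1 <;> apply countP_congr' <;> intro ρ <;>
      rcases class_cases ρ with ⟨h1, h2⟩ | ⟨h1, h2⟩ | ⟨h1, h2⟩ <;>
      simp [Br_E, iE, h1, h2] <;> omega
  · apply countP_congr'; intro ρ
    rcases class_cases ρ with ⟨h1, h2⟩ | ⟨h1, h2⟩ | ⟨h1, h2⟩ <;>
      simp [Br_E, iE, h1, h2] <;> omega

lemma expand_Br_W :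
    L.countP (fun ρ => decide (Br (W :: ρ) = k)) =
      L.countP (fun ρ => decide (Br ρ = k - 1) && hE ρ) +
      L.countP (fun ρ => decide (Br ρ = k - 1) && hN ρ) +
      L.countP (fun ρ => decide (Br ρ = k) && !(hE ρ || hN ρ)) := by
  rw [countP_split3 L (fun ρ => decide (Br (W :: ρ) = k))]
  congr 1
  · congr 1 <;> apply countP_congr' <;> intro ρ <;>
      rcases class_cases ρ with ⟨h1, h2⟩ | ⟨h1, h2⟩ | ⟨h1, h2⟩ <;>
      simp [Br_W, iE, iN, h1, h2] <;> omega
  · apply countP_congr'; intro ρ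
    rcases class_cases ρ with ⟨h1, h2⟩ | ⟨h1, h2⟩ | ⟨h1, h2⟩ <;>
      simp [Br_W, iE, iN, h1, h2] <;> omega

end Expansions
/-! ### The main equidistribution lemma -/

lemma main_lemma : ∀ X : List Step, ∀ Y : List Step, (∀ s ∈ X, isVert s = true) →
    (∀ s ∈ Y, isHoriz s = true) → ∀ k : ℤ,
    ((shuf X Y).countP (fun ρ => decide (Ar ρ = k) && hE ρ) +
     (shuf X Y).countP (fun ρ => decide (Ar ρ = k) && hN ρ) =
     (shuf X Y).countP (fun ρ => decide (Br ρ = k) && hE ρ) +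
     (shuf X Y).countP (fun ρ => decide (Br ρ = k) && hN ρ)) ∧
    ((shuf X Y).countP (fun ρ => decide (Ar ρ = k) && !(hE ρ || hN ρ)) =
     (shuf X Y).countP (fun ρ => decide (Br ρ = k) && !(hE ρ || hN ρ))) := by
  intro X
  induction X with
  | nil =>
    intro Y _ hY k
    refine ⟨?_, ?_⟩ <;>
      simp [List.countP_cons, Ar_eq_Br_horiz Y hY]
  | cons x X ihX =>
    intro Y
    induction Y with
    | nil =>
      intro hX _ k
      refine ⟨?_, ?_⟩ <;>
        simp [List.countP_cons, Ar_eq_Br_vert (x :: X) hX]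
    | cons y Y ihY =>
      intro hX hY k
      have hxv : isVert x = true := hX x (by simp)
      have hyh : isHoriz y = true := hY y (by simp)
      have hX' : ∀ s ∈ X, isVert s = true := fun s hs => hX s (by simp [hs])
      have hY' : ∀ s ∈ Y, isHoriz s = true := fun s hs => hY s (by simp [hs])
      rcases vert_cases hxv with rfl | rfl <;> rcases horiz_cases hyh with rfl | rfl
      · -- x = N, y = E
        obtain ⟨ih1EN, ih1O⟩ := ihX (E :: Y) hX' hY k
        obtain ⟨ih2EN, -⟩ := ihY hX hY' k
        obtain ⟨-, ih2O⟩ := ihY hX hY' (k + 1)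
        have ks1 := key_shift X Y hX' hY' (k - 1)
        have ks2 := key_shift X Y hX' hY' k
        have e1 := expand_Ar_E (shuf (N :: X) Y) k
        have e2 := expand_Br_E (shuf (N :: X) Y) k
        have e3 := expand_Br_N (shuf X (E :: Y)) k
        have e4 : (shuf X (E :: Y)).countP (fun ρ => decide (Ar ρ = k)) =
            (shuf X (E :: Y)).countP (fun ρ => decide (Ar ρ = k) && hE ρ) +
            (shuf X (E :: Y)).countP (fun ρ => decide (Ar ρ = k) && hN ρ) +
            (shuf X (E :: Y)).countP (fun ρ => decide (Ar ρ = k) && !(hE ρ || hN ρ)) :=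
          countP_split3 _ _
        have e5 : (shuf X (E :: Y)).countP (fun ρ => decide (Br ρ = k)) =
            (shuf X (E :: Y)).countP (fun ρ => decide (Br ρ = k) && hE ρ) +
            (shuf X (E :: Y)).countP (fun ρ => decide (Br ρ = k) && hN ρ) +
            (shuf X (E :: Y)).countP (fun ρ => decide (Br ρ = k) && !(hE ρ || hN ρ)) :=
          countP_split3 _ _
        have hks1 : (shuf X (E :: Y)).countP (fun ρ => decide (Br ρ = k - 1) && hE ρ) =
            (shuf (N :: X) Y).countP (fun ρ => decide (Br ρ = k) && hN ρ) := by
          have h := key_shift X Y hX' hY' (k - 1)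
          simpa only [show k - 1 + 1 = k from by ring] using h
        have hks2 : (shuf X (E :: Y)).countP (fun ρ => decide (Br ρ = k) && hE ρ) =
            (shuf (N :: X) Y).countP (fun ρ => decide (Br ρ = k + 1) && hN ρ) := ks2
        refine ⟨?_, ?_⟩ <;>
          simp only [shuf_cons_cons, List.countP_append, List.countP_map, Function.comp_def,
            fun ρ => (Ar_N ρ).trans rfl, fun ρ => (Ar_S ρ).trans rfl, fun ρ => (Br_S ρ).trans rfl, hE_E, hE_W, hE_N, hE_S, hN_E, hN_W, hN_N, hN_S,
            Bool.or_false, Bool.false_or, Bool.or_true, Bool.true_or,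
            Bool.and_true, Bool.and_false, Bool.not_true, Bool.not_false, List.countP_false,
            Function.const_apply] <;>
          omega
      · -- x = N, y = W
        obtain ⟨ih1EN, ih1O⟩ := ihX (W :: Y) hX' hY k
        obtain ⟨ih2EN, -⟩ := ihY hX hY' (k - 1)
        obtain ⟨-, ih2O⟩ := ihY hX hY' k
        have e1 := expand_Br_N (shuf X (W :: Y)) k
        have e2 : (shuf X (W :: Y)).countP (fun ρ => decide (Ar ρ = k)) =
            (shuf X (W :: Y)).countP (fun ρ => decide (Ar ρ = k) && hE ρ) +
            (shuf X (W :: Y)).countP (fun ρ => decide (Ar ρ = k) && hN ρ) +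
            (shuf X (W :: Y)).countP (fun ρ => decide (Ar ρ = k) && !(hE ρ || hN ρ)) :=
          countP_split3 _ _
        have e3 := expand_Ar_W (shuf (N :: X) Y) k
        have e4 := expand_Br_W (shuf (N :: X) Y) k
        have hv1 : (shuf X (W :: Y)).countP (fun ρ => decide (Br ρ = k - 1) && hE ρ) = 0 :=
          vanish_hE hX' (by simp) _
        have hv2 : (shuf X (W :: Y)).countP (fun ρ => decide (Br ρ = k) && hE ρ) = 0 :=
          vanish_hE hX' (by simp) _
        have hv3 : (shuf X (W :: Y)).countP (fun ρ => decide (Ar ρ = k) && hE ρ) = 0 :=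
          vanish_hE hX' (by simp) _
        refine ⟨?_, ?_⟩ <;>
          simp only [shuf_cons_cons, List.countP_append, List.countP_map, Function.comp_def,
            fun ρ => (Ar_N ρ).trans rfl, fun ρ => (Ar_S ρ).trans rfl, fun ρ => (Br_S ρ).trans rfl, hE_E, hE_W, hE_N, hE_S, hN_E, hN_W, hN_N, hN_S,
            Bool.or_false, Bool.false_or, Bool.or_true, Bool.true_or,
            Bool.and_true, Bool.and_false, Bool.not_true, Bool.not_false, List.countP_false,
            Function.const_apply] <;>
          omega
      · -- x = S, y = E
        obtain ⟨ih1EN, ih1O⟩ := ihX (E :: Y) hX' hY k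
        obtain ⟨ih2EN, -⟩ := ihY hX hY' k
        obtain ⟨-, ih2O⟩ := ihY hX hY' (k + 1)
        have e1 := expand_Ar_E (shuf (S :: X) Y) k
        have e2 := expand_Br_E (shuf (S :: X) Y) k
        have e3 : (shuf X (E :: Y)).countP (fun ρ => decide (Ar ρ = k)) =
            (shuf X (E :: Y)).countP (fun ρ => decide (Ar ρ = k) && hE ρ) +
            (shuf X (E :: Y)).countP (fun ρ => decide (Ar ρ = k) && hN ρ) +
            (shuf X (E :: Y)).countP (fun ρ => decide (Ar ρ = k) && !(hE ρ || hN ρ)) :=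
          countP_split3 _ _
        have e4 : (shuf X (E :: Y)).countP (fun ρ => decide (Br ρ = k)) =
            (shuf X (E :: Y)).countP (fun ρ => decide (Br ρ = k) && hE ρ) +
            (shuf X (E :: Y)).countP (fun ρ => decide (Br ρ = k) && hN ρ) +
            (shuf X (E :: Y)).countP (fun ρ => decide (Br ρ = k) && !(hE ρ || hN ρ)) :=
          countP_split3 _ _
        have hv1 : (shuf (S :: X) Y).countP (fun ρ => decide (Ar ρ = k) && hN ρ) = 0 :=
          vanish_hN (by simp) hY' _
        have hv2 : (shuf (S :: X) Y).countP (fun ρ => decide (Br ρ = k) && hN ρ) = 0 :=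
          vanish_hN (by simp) hY' _
        have hv3 : (shuf (S :: X) Y).countP (fun ρ => decide (Br ρ = k + 1) && hN ρ) = 0 :=
          vanish_hN (by simp) hY' _
        refine ⟨?_, ?_⟩ <;>
          simp only [shuf_cons_cons, List.countP_append, List.countP_map, Function.comp_def,
            fun ρ => (Ar_N ρ).trans rfl, fun ρ => (Ar_S ρ).trans rfl, fun ρ => (Br_S ρ).trans rfl, hE_E, hE_W, hE_N, hE_S, hN_E, hN_W, hN_N, hN_S,
            Bool.or_false, Bool.false_or, Bool.or_true, Bool.true_or,
            Bool.and_true, Bool.and_false, Bool.not_true, Bool.not_false, List.countP_false,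
            Function.const_apply] <;>
          omega
      · -- x = S, y = W
        obtain ⟨ih1EN, ih1O⟩ := ihX (W :: Y) hX' hY k
        obtain ⟨ih2EN, -⟩ := ihY hX hY' (k - 1)
        obtain ⟨-, ih2O⟩ := ihY hX hY' k
        have e1 : (shuf X (W :: Y)).countP (fun ρ => decide (Ar ρ = k)) =
            (shuf X (W :: Y)).countP (fun ρ => decide (Ar ρ = k) && hE ρ) +
            (shuf X (W :: Y)).countP (fun ρ => decide (Ar ρ = k) && hN ρ) +
            (shuf X (W :: Y)).countP (fun ρ => decide (Ar ρ = k) && !(hE ρ || hN ρ)) :=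
          countP_split3 _ _
        have e2 : (shuf X (W :: Y)).countP (fun ρ => decide (Br ρ = k)) =
            (shuf X (W :: Y)).countP (fun ρ => decide (Br ρ = k) && hE ρ) +
            (shuf X (W :: Y)).countP (fun ρ => decide (Br ρ = k) && hN ρ) +
            (shuf X (W :: Y)).countP (fun ρ => decide (Br ρ = k) && !(hE ρ || hN ρ)) :=
          countP_split3 _ _
        have e3 := expand_Ar_W (shuf (S :: X) Y) k
        have e4 := expand_Br_W (shuf (S :: X) Y) k
        refine ⟨?_, ?_⟩ <;>
          simp only [shuf_cons_cons, List.countP_append, List.countP_map, Function.comp_def,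
            fun ρ => (Ar_N ρ).trans rfl, fun ρ => (Ar_S ρ).trans rfl, fun ρ => (Br_S ρ).trans rfl, hE_E, hE_W, hE_N, hE_S, hN_E, hN_W, hN_N, hN_S,
            Bool.or_false, Bool.false_or, Bool.or_true, Bool.true_or,
            Bool.and_true, Bool.and_false, Bool.not_true, Bool.not_false, List.countP_false,
            Function.const_apply] <;>
          omega
/-! ### Bridging `Ar`, `Br` with `invert`, `signedPeak` -/

lemma pairs_cons_cons (a b : Step) (l : List Step) :
    pairs (a :: b :: l) = (a, b) :: pairs (b :: l) := rfl

lemma pairs_append (τ : List Step) (x : Step) :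
    pairs (τ ++ [x]) = pairs τ ++ (τ.getLast?.elim [] (fun l => [(l, x)])) := by
  induction τ with
  | nil => rfl
  | cons a τ ih =>
    cases τ with
    | nil => rfl
    | cons b τ' =>
      have h1 : (a :: b :: τ') ++ [x] = a :: ((b :: τ') ++ [x]) := rfl
      have h2 : (b :: τ') ++ [x] = b :: (τ' ++ [x]) := rfl
      rw [h1, h2, pairs_cons_cons, ← h2, ih, List.getLast?_cons_cons, pairs_cons_cons]
      rfl

lemma invert_append_horiz (τ : List Step) (x : Step) (hx : isHoriz x = true) :
    invert (τ ++ [x]) = invert τ := by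
  have hfil : (List.filter
      (fun p => decide ((p.1 = Step.W ∨ p.1 = Step.S) ∧ (p.2 = Step.N ∨ p.2 = Step.S)))
      (τ.getLast?.elim [] (fun l => [(l, x)]))).length = 0 := by
    rcases τ.getLast? with _ | l
    · rfl
    · rcases horiz_cases hx with rfl | rfl <;> simp
  rcases τ with _ | ⟨t, τ⟩
  · rcases horiz_cases hx with rfl | rfl <;> rfl
  · unfold invert
    rw [pairs_append, List.filter_append, List.length_append, hfil]
    simp

lemma invert_append_vert (τ : List Step) (x : Step) (hx : isVert x = true) :
    (invert (τ ++ [x]) : ℤ) =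
      (invert τ : ℤ) + (τ.getLast?.elim 1 (fun l => if l = W ∨ l = S then 1 else 0)) := by
  rcases τ with _ | ⟨t, τ⟩
  · rcases vert_cases hx with rfl | rfl <;> rfl
  · have hfil : ∀ l : Step, (List.filter
        (fun p => decide ((p.1 = Step.W ∨ p.1 = Step.S) ∧ (p.2 = Step.N ∨ p.2 = Step.S)))
        [(l, x)]).length = if l = W ∨ l = S then 1 else 0 := by
      intro l
      rcases vert_cases hx with rfl | rfl <;> by_cases hl : l = W ∨ l = S <;>
        simp [List.filter_singleton, hl]
    obtain ⟨l, hgl⟩ : ∃ l, (t :: τ).getLast? = some l := by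
      cases h : (t :: τ).getLast? with
      | none => simp at h
      | some l => exact ⟨l, rfl⟩
    unfold invert
    rw [pairs_append, List.filter_append, List.length_append, hgl]
    simp only [Option.elim]
    rw [hfil l]
    have hh : ((t :: τ) ++ [x]).head? = (t :: τ).head? := rfl
    rw [hh]
    push_cast
    by_cases hl : l = W ∨ l = S <;> simp [hl] <;> ring

lemma speak_append (τ : List Step) (x : Step) :
    signedPeak (τ ++ [x]) = signedPeak τ
      + (if τ.getLast? = some N ∧ x = W then 1 else 0)
      - (if τ.getLast? = some E ∧ x = S then 1 else 0) := by
  unfold signedPeak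
  rw [pairs_append, List.filter_append, List.filter_append, List.length_append,
    List.length_append]
  rcases hgl : τ.getLast? with _ | l
  · simp
  · simp only [Option.elim]
    have h1 : (List.filter (fun p => decide (p.1 = N ∧ p.2 = W)) [(l, x)]).length =
        if l = N ∧ x = W then 1 else 0 := by
      by_cases h : l = N ∧ x = W <;> simp [List.filter_singleton, h]
    have h2 : (List.filter (fun p => decide (p.1 = E ∧ p.2 = S)) [(l, x)]).length =
        if l = E ∧ x = S then 1 else 0 := by
      by_cases h : l = E ∧ x = S <;> simp [List.filter_singleton, h]
    rw [h1, h2]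
    push_cast
    by_cases ha : l = N ∧ x = W <;> by_cases hb : l = E ∧ x = S <;>
      simp [ha, hb] <;> ring

lemma elim_iEN (ρ : List Step) :
    (ρ.head?.elim 1 (fun l => if l = W ∨ l = S then (1 : ℤ) else 0)) + iEN ρ = 1 := by
  rcases ρ with _ | ⟨c, ρ⟩
  · simp [iEN, iE, iN]
  · cases c <;> simp [iEN, iE, iN, Option.elim]

lemma bridgeA (ρ : List Step) :
    Ar ρ = (invert ρ.reverse : ℤ) - (ρ.count Step.S : ℤ) - iEN ρ := by
  induction ρ with
  | nil => simp [invert, iEN, iE, iN, pairs]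
  | cons x ρ ih =>
    rw [List.reverse_cons]
    have hgl : ρ.reverse.getLast? = ρ.head? := List.getLast?_reverse (l := ρ)
    cases x with
    | E =>
      have h1 : iEN (E :: ρ) = 1 := by simp [iEN, iE, iN]
      have hc : (E :: ρ).count Step.S = ρ.count Step.S := by simp
      rw [invert_append_horiz ρ.reverse E rfl, Ar_E, ih, h1, hc]
      ring
    | W =>
      have h1 : iEN (W :: ρ) = 0 := by simp [iEN, iE, iN]
      have hc : (W :: ρ).count Step.S = ρ.count Step.S := by simp
      rw [invert_append_horiz ρ.reverse W rfl, Ar_W, ih, h1, hc]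
      ring
    | N =>
      have h1 : iEN (N :: ρ) = 1 := by simp [iEN, iE, iN]
      have hc : (N :: ρ).count Step.S = ρ.count Step.S := by simp
      have he := elim_iEN ρ
      rw [invert_append_vert ρ.reverse N rfl, hgl, Ar_N, ih, h1, hc]
      omega
    | S =>
      have h1 : iEN (S :: ρ) = 0 := by simp [iEN, iE, iN]
      have hc : (S :: ρ).count Step.S = ρ.count Step.S + 1 := by simp
      have he := elim_iEN ρ
      rw [invert_append_vert ρ.reverse S rfl, hgl, Ar_S, ih, h1, hc]
      push_cast
      omega

lemma head_iE (ρ : List Step) : (if ρ.head? = some Step.E then (1 : ℤ) else 0) = iE ρ := by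
  rcases ρ with _ | ⟨c, ρ⟩
  · simp [iE]
  · cases c <;> simp [iE]

lemma head_iN (ρ : List Step) : (if ρ.head? = some Step.N then (1 : ℤ) else 0) = iN ρ := by
  rcases ρ with _ | ⟨c, ρ⟩
  · simp [iN]
  · cases c <;> simp [iN]

lemma bridgeB (ρ : List Step) : Br ρ = signedPeak ρ.reverse - iE ρ := by
  induction ρ with
  | nil => simp [signedPeak, iE, pairs]
  | cons x ρ ih =>
    rw [List.reverse_cons, speak_append]
    have hgl : ρ.reverse.getLast? = ρ.head? := List.getLast?_reverse (l := ρ)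
    rw [hgl]
    cases x with
    | E =>
      have h1 : (if ρ.head? = some N ∧ (E : Step) = W then (1 : ℤ) else 0) = 0 := by simp
      have h2 : (if ρ.head? = some E ∧ (E : Step) = S then (1 : ℤ) else 0) = 0 := by simp
      have h3 : iE (E :: ρ) = 1 := by simp [iE]
      rw [Br_E, ih, h1, h2, h3]
      ring
    | W =>
      have h1 : (if ρ.head? = some N ∧ (W : Step) = W then (1 : ℤ) else 0) = iN ρ := by
        rw [← head_iN]; simp
      have h2 : (if ρ.head? = some E ∧ (W : Step) = S then (1 : ℤ) else 0) = 0 := by simp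
      have h3 : iE (W :: ρ) = 0 := by simp [iE]
      rw [Br_W, ih, h1, h2, h3]
      ring
    | N =>
      have h1 : (if ρ.head? = some N ∧ (N : Step) = W then (1 : ℤ) else 0) = 0 := by simp
      have h2 : (if ρ.head? = some E ∧ (N : Step) = S then (1 : ℤ) else 0) = 0 := by simp
      have h3 : iE (N :: ρ) = 0 := by simp [iE]
      rw [Br_N, ih, h1, h2, h3]
      ring
    | S =>
      have h1 : (if ρ.head? = some N ∧ (S : Step) = W then (1 : ℤ) else 0) = 0 := by simp
      have h2 : (if ρ.head? = some E ∧ (S : Step) = S then (1 : ℤ) else 0) = iE ρ := by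
        rw [← head_iE]; simp
      have h3 : iE (S :: ρ) = 0 := by simp [iE]
      rw [Br_S, ih, h1, h2, h3]
      ring
/-! ### Counting shuffles via `shuf` -/

lemma ncard_shuffle (V H : List Step) (hV : ∀ s ∈ V, isVert s = true)
    (hH : ∀ s ∈ H, isHoriz s = true) (P : List Step → Prop) [DecidablePred P] :
    {σ : List Step | IsShuffle V H σ ∧ P σ}.ncard =
      (shuf V.reverse H.reverse).countP (fun ρ => decide (P ρ.reverse)) := by
  have hX : ∀ s ∈ V.reverse, isVert s = true := fun s hs => hV s (List.mem_reverse.1 hs)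
  have hY : ∀ s ∈ H.reverse, isHoriz s = true := fun s hs => hH s (List.mem_reverse.1 hs)
  have hmem : ∀ σ : List Step, IsShuffle V H σ ↔ σ.reverse ∈ shuf V.reverse H.reverse := by
    intro σ
    rw [mem_shuf _ _ hX hY]
    unfold IsShuffle
    rw [List.filter_reverse, List.filter_reverse]
    constructor
    · rintro ⟨h1, h2⟩; rw [h1, h2]; exact ⟨rfl, rfl⟩
    · rintro ⟨h1, h2⟩
      exact ⟨List.reverse_injective h1, List.reverse_injective h2⟩
  have hset : {σ : List Step | IsShuffle V H σ ∧ P σ} =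
      ↑((((shuf V.reverse H.reverse).filter
          (fun ρ => decide (P ρ.reverse))).toFinset).image List.reverse) := by
    ext σ
    simp only [Set.mem_setOf_eq, Finset.coe_image, Set.mem_image, Finset.mem_coe,
      List.mem_toFinset, List.mem_filter]
    constructor
    · rintro ⟨h1, h2⟩
      exact ⟨σ.reverse, ⟨(hmem σ).1 h1, by simp [h2]⟩, List.reverse_reverse σ⟩
    · rintro ⟨ρ, ⟨hρ, hPρ⟩, rfl⟩
      refine ⟨(hmem ρ.reverse).2 (by simpa using hρ), ?_⟩
      simpa using hPρ
  rw [hset, Set.ncard_coe_finset,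
    Finset.card_image_of_injective _ List.reverse_injective,
    List.toFinset_card_of_nodup ((nodup_shuf _ _ hX hY).filter _),
    ← List.countP_eq_length_filter]


end ShufAux

open ShufAux in
/-- **Proposition (equidistribution of shifted In-Vert and signed peak-count).**
If `V` is a nonempty vertical path ending in `S` and `H` is a horizontal path, then for
every integer `k` the number of shuffles of `V` and `H` with shifted In-Vert `k` equals
the number of shuffles of `V` and `H` with signed peak-count `k`. -/
theorem shifted_invert_equidistributed_signedPeak (V H : List Step)
    (hV : ∀ s ∈ V, isVert s = true) (hVne : V ≠ [])
    (hVlast : V.getLast? = some Step.S)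
    (hH : ∀ s ∈ H, isHoriz s = true)
    (k : ℤ) :
    {σ : List Step | IsShuffle V H σ ∧ (invert σ : ℤ) - (σ.count Step.S : ℤ) = k}.ncard
      = {σ : List Step | IsShuffle V H σ ∧ signedPeak σ = k}.ncard := by
  classical
  have hX : ∀ s ∈ V.reverse, isVert s = true := fun s hs => hV s (List.mem_reverse.1 hs)
  have hY : ∀ s ∈ H.reverse, isHoriz s = true := fun s hs => hH s (List.mem_reverse.1 hs)
  have hXhead : V.reverse.head? = some Step.S := by
    rw [List.head?_reverse]; exact hVlast
  have hNo : ∀ ρ ∈ shuf V.reverse H.reverse, hN ρ = false := by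
    intro ρ hρ
    cases h : hN ρ
    · rfl
    · exfalso
      rcases head_mem_shuf hρ (hN_head h) with hh | hh
      · rw [hXhead] at hh; simp at hh
      · have hmem : Step.N ∈ H.reverse := List.mem_of_mem_head? (by rw [hh]; rfl)
        have := hY _ hmem
        simp [isHoriz] at this
  have h1 : {σ : List Step | IsShuffle V H σ ∧ (invert σ : ℤ) - (σ.count Step.S : ℤ) = k}.ncard
      = (shuf V.reverse H.reverse).countP (fun ρ => decide ((invert ρ.reverse : ℤ) - (ρ.reverse.count Step.S : ℤ) = k)) :=
    ncard_shuffle V H hV hH _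
  have h2 : {σ : List Step | IsShuffle V H σ ∧ signedPeak σ = k}.ncard
      = (shuf V.reverse H.reverse).countP (fun ρ => decide (signedPeak ρ.reverse = k)) :=
    ncard_shuffle V H hV hH _
  have hsplitA : (shuf V.reverse H.reverse).countP (fun ρ => decide ((invert ρ.reverse : ℤ) - (ρ.reverse.count Step.S : ℤ) = k))
      = (shuf V.reverse H.reverse).countP (fun ρ => decide ((invert ρ.reverse : ℤ) - (ρ.reverse.count Step.S : ℤ) = k) && hE ρ)
      + (shuf V.reverse H.reverse).countP (fun ρ => decide ((invert ρ.reverse : ℤ) - (ρ.reverse.count Step.S : ℤ) = k) && !hE ρ) :=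
    countP_split _ _ _
  have hsplitB : (shuf V.reverse H.reverse).countP (fun ρ => decide (signedPeak ρ.reverse = k))
      = (shuf V.reverse H.reverse).countP (fun ρ => decide (signedPeak ρ.reverse = k) && hE ρ)
      + (shuf V.reverse H.reverse).countP (fun ρ => decide (signedPeak ρ.reverse = k) && !hE ρ) :=
    countP_split _ _ _
  have hA1 : (shuf V.reverse H.reverse).countP (fun ρ => decide ((invert ρ.reverse : ℤ) - (ρ.reverse.count Step.S : ℤ) = k) && hE ρ)
      = (shuf V.reverse H.reverse).countP (fun ρ => decide (Ar ρ = k - 1) && hE ρ) := by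
    apply List.countP_congr
    intro ρ hρ
    have hb := bridgeA ρ
    have h3 : iEN ρ = iE ρ := by simp [iEN, iN, hNo ρ hρ]
    have h4 : (ρ.reverse.count Step.S : ℤ) = (ρ.count Step.S : ℤ) := by
      rw [List.count_reverse]
    cases h : hE ρ
    · simp [h]
    · have h5 : iE ρ = 1 := by simp [iE, h]
      simp only [h, Bool.and_true, decide_eq_true_eq]
      omega
  have hA2 : (shuf V.reverse H.reverse).countP (fun ρ => decide ((invert ρ.reverse : ℤ) - (ρ.reverse.count Step.S : ℤ) = k) && !hE ρ)
      = (shuf V.reverse H.reverse).countP (fun ρ => decide (Ar ρ = k) && !(hE ρ || hN ρ)) := by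
    apply List.countP_congr
    intro ρ hρ
    have hb := bridgeA ρ
    have h3 : iEN ρ = iE ρ := by simp [iEN, iN, hNo ρ hρ]
    have h4 : (ρ.reverse.count Step.S : ℤ) = (ρ.count Step.S : ℤ) := by
      rw [List.count_reverse]
    cases h : hE ρ
    · have h5 : iE ρ = 0 := by simp [iE, h]
      simp only [h, hNo ρ hρ, Bool.not_false, Bool.and_true, Bool.or_false,
        decide_eq_true_eq]
      omega
    · simp [h]
  have hB1 : (shuf V.reverse H.reverse).countP (fun ρ => decide (signedPeak ρ.reverse = k) && hE ρ)
      = (shuf V.reverse H.reverse).countP (fun ρ => decide (Br ρ = k - 1) && hE ρ) := by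
    apply List.countP_congr
    intro ρ hρ
    have hb := bridgeB ρ
    cases h : hE ρ
    · simp [h]
    · have h5 : iE ρ = 1 := by simp [iE, h]
      simp only [h, Bool.and_true, decide_eq_true_eq]
      omega
  have hB2 : (shuf V.reverse H.reverse).countP (fun ρ => decide (signedPeak ρ.reverse = k) && !hE ρ)
      = (shuf V.reverse H.reverse).countP (fun ρ => decide (Br ρ = k) && !(hE ρ || hN ρ)) := by
    apply List.countP_congr
    intro ρ hρ
    have hb := bridgeB ρ
    cases h : hE ρ
    · have h5 : iE ρ = 0 := by simp [iE, h]
      simp only [h, hNo ρ hρ, Bool.not_false, Bool.and_true, Bool.or_false,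
        decide_eq_true_eq]
      omega
    · simp [h]
  have m1 := (main_lemma V.reverse H.reverse hX hY (k - 1)).1
  have m2 := (main_lemma V.reverse H.reverse hX hY k).2
  have v1 : (shuf V.reverse H.reverse).countP (fun ρ => decide (Ar ρ = k - 1) && hN ρ) = 0 :=
    vanish_hN (by rw [hXhead]; simp) hY _
  have v2 : (shuf V.reverse H.reverse).countP (fun ρ => decide (Br ρ = k - 1) && hN ρ) = 0 :=
    vanish_hN (by rw [hXhead]; simp) hY _
  rw [h1, h2, hsplitA, hsplitB, hA1, hA2, hB1, hB2]
  omega
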